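/- The Roesser realization of Theorem 1 with zero boundary conditions reproduces the 2-D convolution output: for all inputs u and all indices (i₁,i₂), the Roesser output equals b + ∑_{t₁=0}^{r₁}∑_{t₂=0}^{r₂} K[t₁,t₂] u[i₁−t₁, i₂−t₂]. -/

import Mathlib

open Matrix

/-- Auxiliary: partial 2-D convolution row sum. -/
def Fconv (r₂ cin cout : ℕ) (K : ℕ → ℕ → Matrix (Fin cout) (Fin cin) ℝ)
    (u : ℕ → ℕ → Fin cin → ℝ) (a bb t : ℕ) (o : Fin cout) : ℝ :=
  ∑ t₂ ∈ Finset.range (r₂ + 1), if t₂ ≤ bb then (K t t₂).mulVec (u a (bb - t₂)) o else 0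

theorem stmt11 (r₁ r₂ cin cout : ℕ) (hr₁ : 0 < r₁) (hr₂ : 0 < r₂)
    (K : ℕ → ℕ → Matrix (Fin cout) (Fin cin) ℝ) (b : Fin cout → ℝ)
    (A₁₁ : Matrix (Fin r₁ × Fin cout) (Fin r₁ × Fin cout) ℝ)
    (A₁₂ : Matrix (Fin r₁ × Fin cout) (Fin r₂ × Fin cin) ℝ)
    (A₂₂ : Matrix (Fin r₂ × Fin cin) (Fin r₂ × Fin cin) ℝ)
    (B₁ : Matrix (Fin r₁ × Fin cout) (Fin cin) ℝ)
    (B₂ : Matrix (Fin r₂ × Fin cin) (Fin cin) ℝ)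
    (C₁ : Matrix (Fin cout) (Fin r₁ × Fin cout) ℝ)
    (C₂ : Matrix (Fin cout) (Fin r₂ × Fin cin) ℝ)
    (D : Matrix (Fin cout) (Fin cin) ℝ)
    (hA₁₁ : ∀ p q, A₁₁ p q = if (p.1 : ℕ) = (q.1 : ℕ) + 1 ∧ p.2 = q.2 then 1 else 0)
    (hA₁₂ : ∀ p q, A₁₂ p q = K (r₁ - (p.1 : ℕ)) (r₂ - (q.1 : ℕ)) p.2 q.2)
    (hA₂₂ : ∀ p q, A₂₂ p q = if (q.1 : ℕ) = (p.1 : ℕ) + 1 ∧ p.2 = q.2 then 1 else 0)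
    (hB₁ : ∀ p c, B₁ p c = K (r₁ - (p.1 : ℕ)) 0 p.2 c)
    (hB₂ : ∀ p c, B₂ p c = if (p.1 : ℕ) = r₂ - 1 ∧ p.2 = c then 1 else 0)
    (hC₁ : ∀ o p, C₁ o p = if (p.1 : ℕ) = r₁ - 1 ∧ o = p.2 then 1 else 0)
    (hC₂ : ∀ o p, C₂ o p = K 0 (r₂ - (p.1 : ℕ)) o p.2)
    (hD : D = K 0 0)
    (u : ℕ → ℕ → Fin cin → ℝ)
    (x₁ : ℕ → ℕ → Fin r₁ × Fin cout → ℝ)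
    (x₂ : ℕ → ℕ → Fin r₂ × Fin cin → ℝ)
    (y : ℕ → ℕ → Fin cout → ℝ)
    (hx₁0 : ∀ i₂, x₁ 0 i₂ = 0) (hx₂0 : ∀ i₁, x₂ i₁ 0 = 0)
    (hx₁ : ∀ i₁ i₂, x₁ (i₁ + 1) i₂ =
      A₁₁.mulVec (x₁ i₁ i₂) + A₁₂.mulVec (x₂ i₁ i₂) + B₁.mulVec (u i₁ i₂))
    (hx₂ : ∀ i₁ i₂, x₂ i₁ (i₂ + 1) = A₂₂.mulVec (x₂ i₁ i₂) + B₂.mulVec (u i₁ i₂))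
    (hy : ∀ i₁ i₂, y i₁ i₂ =
      b + C₁.mulVec (x₁ i₁ i₂) + C₂.mulVec (x₂ i₁ i₂) + D.mulVec (u i₁ i₂)) :
    ∀ i₁ i₂, y i₁ i₂ = b + ∑ t₁ ∈ Finset.range (r₁ + 1), ∑ t₂ ∈ Finset.range (r₂ + 1),
      if t₁ ≤ i₁ ∧ t₂ ≤ i₂ then (K t₁ t₂).mulVec (u (i₁ - t₁) (i₂ - t₂)) else 0 := by
  -- abbreviation
  set F : ℕ → ℕ → ℕ → Fin cout → ℝ := Fconv r₂ cin cout K u with hFdef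
  -- closed form for x₂
  have key2 : ∀ i₂ i₁ (p : Fin r₂ × Fin cin),
      x₂ i₁ i₂ p = if r₂ - (p.1 : ℕ) ≤ i₂ then u i₁ (i₂ - (r₂ - (p.1 : ℕ))) p.2 else 0 := by
    intro i₂
    induction i₂ with
    | zero =>
      intro i₁ p
      have hlt := p.1.isLt
      have : ¬ (r₂ - (p.1 : ℕ) ≤ 0) := by omega
      simp [hx₂0, this]
    | succ n ih =>
      intro i₁ p
      rw [hx₂ i₁ n]
      simp only [Pi.add_apply]
      by_cases hp : (p.1 : ℕ) + 1 < r₂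
      · have hA : A₂₂.mulVec (x₂ i₁ n) p = x₂ i₁ n (⟨(p.1 : ℕ) + 1, hp⟩, p.2) := by
          simp only [Matrix.mulVec, dotProduct]
          rw [Finset.sum_eq_single ((⟨(p.1 : ℕ) + 1, hp⟩ : Fin r₂), p.2)]
          · rw [hA₂₂]; simp
          · intro q _ hq
            rw [hA₂₂]
            have : ¬ (((q.1 : ℕ) = (p.1 : ℕ) + 1) ∧ p.2 = q.2) := by
              rintro ⟨h1, h2⟩
              apply hq
              obtain ⟨q1, q2⟩ := q
              simp only [Prod.mk.injEq]
              exact ⟨Fin.ext h1, h2.symm⟩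
            simp [this]
          · intro h; exact absurd (Finset.mem_univ _) h
        have hB : B₂.mulVec (u i₁ n) p = 0 := by
          simp only [Matrix.mulVec, dotProduct]
          apply Finset.sum_eq_zero
          intro c _
          rw [hB₂]
          have : ¬ ((p.1 : ℕ) = r₂ - 1 ∧ p.2 = c) := by
            rintro ⟨h1, _⟩; omega
          simp [this]
        rw [hA, hB, ih, add_zero]
        have hlt := p.1.isLt
        by_cases hc : r₂ - ((p.1 : ℕ) + 1) ≤ n
        · have hc' : r₂ - (p.1 : ℕ) ≤ n + 1 := by omega
          simp only [hc, hc', if_true]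
          congr 1
          omega
        · have hc' : ¬ (r₂ - (p.1 : ℕ) ≤ n + 1) := by omega
          simp [hc, hc']
      · have hlast : (p.1 : ℕ) = r₂ - 1 := by have := p.1.isLt; omega
        have hA : A₂₂.mulVec (x₂ i₁ n) p = 0 := by
          simp only [Matrix.mulVec, dotProduct]
          apply Finset.sum_eq_zero
          intro q _
          rw [hA₂₂]
          have : ¬ (((q.1 : ℕ) = (p.1 : ℕ) + 1) ∧ p.2 = q.2) := by
            rintro ⟨h1, _⟩; have := q.1.isLt; omega
          simp [this]
        have hB : B₂.mulVec (u i₁ n) p = u i₁ n p.2 := by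
          simp only [Matrix.mulVec, dotProduct]
          rw [Finset.sum_eq_single p.2]
          · rw [hB₂]; simp [hlast]
          · intro c _ hc
            rw [hB₂]
            have : ¬ ((p.1 : ℕ) = r₂ - 1 ∧ p.2 = c) := by
              rintro ⟨_, h2⟩; exact hc h2.symm
            simp [this]
          · intro h; exact absurd (Finset.mem_univ _) h
        rw [hA, hB, zero_add]
        have h1 : r₂ - (p.1 : ℕ) = 1 := by omega
        simp [h1]
  -- the x₂ injection term
  have main2 : ∀ i₁ i₂ (t₁ : ℕ) (o : Fin cout),
      (∑ q : Fin r₂ × Fin cin, K t₁ (r₂ - (q.1 : ℕ)) o q.2 * x₂ i₁ i₂ q)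
        + (K t₁ 0).mulVec (u i₁ i₂) o = F i₁ i₂ t₁ o := by
    intro i₁ i₂ t₁ o
    have hg : ∀ ℓ : Fin r₂,
        (∑ c : Fin cin, K t₁ (r₂ - (ℓ : ℕ)) o c * x₂ i₁ i₂ (ℓ, c)) =
          (if r₂ - (ℓ : ℕ) ≤ i₂ then
            (K t₁ (r₂ - (ℓ : ℕ))).mulVec (u i₁ (i₂ - (r₂ - (ℓ : ℕ)))) o else 0) := by
      intro ℓ
      by_cases h : r₂ - (ℓ : ℕ) ≤ i₂
      · simp only [h, if_true, Matrix.mulVec, dotProduct]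
        apply Finset.sum_congr rfl
        intro c _
        rw [key2]
        simp [h]
      · simp only [h, if_false]
        apply Finset.sum_eq_zero
        intro c _
        rw [key2]
        simp [h]
    set g : ℕ → ℝ := fun t₂ =>
      if t₂ ≤ i₂ then (K t₁ t₂).mulVec (u i₁ (i₂ - t₂)) o else 0 with hgdef
    have h1 : (∑ q : Fin r₂ × Fin cin, K t₁ (r₂ - (q.1 : ℕ)) o q.2 * x₂ i₁ i₂ q)
        = ∑ ℓ ∈ Finset.range r₂, g (r₂ - ℓ) := by
      rw [Fintype.sum_prod_type]
      rw [← Fin.sum_univ_eq_sum_range (fun ℓ => g (r₂ - ℓ)) r₂]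
      exact Finset.sum_congr rfl (fun ℓ _ => hg ℓ)
    have h2 : ∑ ℓ ∈ Finset.range r₂, g (r₂ - ℓ) = ∑ ℓ ∈ Finset.range r₂, g (ℓ + 1) := by
      rw [← Finset.sum_range_reflect (fun j => g (j + 1)) r₂]
      exact Finset.sum_congr rfl (fun j hj => by
        have := Finset.mem_range.1 hj; congr 1; omega)
    have h3 : (K t₁ 0).mulVec (u i₁ i₂) o = g 0 := by simp [hgdef]
    rw [h1, h2, h3, hFdef]
    show _ = Fconv r₂ cin cout K u i₁ i₂ t₁ o
    unfold Fconv
    rw [Finset.sum_range_succ' (fun t₂ => g t₂) r₂]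
  -- evaluation of A₁₂ + B₁ row
  have inj1 : ∀ i₁ i₂ (k : Fin r₁) (o : Fin cout),
      A₁₂.mulVec (x₂ i₁ i₂) (k, o) + B₁.mulVec (u i₁ i₂) (k, o)
        = F i₁ i₂ (r₁ - (k : ℕ)) o := by
    intro i₁ i₂ k o
    have e1 : A₁₂.mulVec (x₂ i₁ i₂) (k, o)
        = ∑ q : Fin r₂ × Fin cin, K (r₁ - (k : ℕ)) (r₂ - (q.1 : ℕ)) o q.2 * x₂ i₁ i₂ q := by
      simp only [Matrix.mulVec, dotProduct]
      exact Finset.sum_congr rfl (fun q _ => by rw [hA₁₂])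
    have e2 : B₁.mulVec (u i₁ i₂) (k, o) = (K (r₁ - (k : ℕ)) 0).mulVec (u i₁ i₂) o := by
      simp only [Matrix.mulVec, dotProduct]
      exact Finset.sum_congr rfl (fun c _ => by rw [hB₁])
    rw [e1, e2, main2]
  -- evaluation of A₁₁ row
  have hA11e : ∀ (v : Fin r₁ × Fin cout → ℝ) (k : Fin r₁) (o : Fin cout),
      A₁₁.mulVec v (k, o) =
        if h : 0 < (k : ℕ) then v (⟨(k : ℕ) - 1, by omega⟩, o) else 0 := by
    intro v k o
    by_cases h : 0 < (k : ℕ)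
    · have hlt : (k : ℕ) - 1 < r₁ := by have := k.isLt; omega
      simp only [h, dif_pos]
      simp only [Matrix.mulVec, dotProduct]
      rw [Finset.sum_eq_single ((⟨(k : ℕ) - 1, hlt⟩ : Fin r₁), o)]
      · rw [hA₁₁]
        have hcond : ((k : ℕ) = (((⟨(k : ℕ) - 1, hlt⟩ : Fin r₁) : Fin r₁) : ℕ) + 1 ∧ o = o) :=
          ⟨by simp only [Fin.val_mk]; omega, rfl⟩
        rw [if_pos hcond, one_mul]
      · intro q _ hq
        rw [hA₁₁]
        have : ¬ (((k : ℕ) = (q.1 : ℕ) + 1) ∧ o = q.2) := by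
          rintro ⟨h1, h2⟩
          apply hq
          rw [Prod.ext_iff]
          exact ⟨Fin.ext (by simp only [Fin.val_mk]; omega), h2.symm⟩
        simp [this]
      · intro h; exact absurd (Finset.mem_univ _) h
    · simp only [h, dif_neg, not_false_iff]
      simp only [Matrix.mulVec, dotProduct]
      apply Finset.sum_eq_zero
      intro q _
      rw [hA₁₁]
      have : ¬ (((k : ℕ) = (q.1 : ℕ) + 1) ∧ o = q.2) := by
        rintro ⟨h1, _⟩; omega
      simp [this]
  -- closed form for x₁
  have key1 : ∀ i₁ i₂ (k : Fin r₁) (o : Fin cout), x₁ i₁ i₂ (k, o) =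
      ∑ j ∈ Finset.range i₁,
        if j ≤ (k : ℕ) then F (i₁ - 1 - j) i₂ (r₁ - (k : ℕ) + j) o else 0 := by
    intro i₁
    induction i₁ with
    | zero => intro i₂ k o; simp [hx₁0]
    | succ n ih =>
      intro i₂ k o
      rw [hx₁ n i₂]
      simp only [Pi.add_apply]
      rw [add_assoc, inj1, hA11e]
      rw [Finset.sum_range_succ'
        (fun j => if j ≤ (k : ℕ) then F (n + 1 - 1 - j) i₂ (r₁ - (k : ℕ) + j) o else 0) n]
      have hz : (if 0 ≤ (k : ℕ) then F (n + 1 - 1 - 0) i₂ (r₁ - (k : ℕ) + 0) o else 0)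
          = F n i₂ (r₁ - (k : ℕ)) o := by simp
      rw [hz]
      congr 1
      by_cases h : 0 < (k : ℕ)
      · simp only [h, dif_pos]
        rw [ih]
        apply Finset.sum_congr rfl
        intro j hj
        have hk := k.isLt
        have hcond : (j ≤ (k : ℕ) - 1) ↔ (j + 1 ≤ (k : ℕ)) := by omega
        by_cases hc : j + 1 ≤ (k : ℕ)
        · simp only [hcond.2 hc, hc, if_true]
          have e1 : n - 1 - j = n + 1 - 1 - (j + 1) := by omega
          have e2 : r₁ - ((k : ℕ) - 1) + j = r₁ - (k : ℕ) + (j + 1) := by omega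
          rw [e1, e2]
        · have : ¬ (j ≤ (k : ℕ) - 1) := by omega
          simp [hc, this]
      · simp only [h, dif_neg, not_false_iff]
        symm
        apply Finset.sum_eq_zero
        intro j _
        have : ¬ (j + 1 ≤ (k : ℕ)) := by omega
        simp [this]
  -- evaluation of C₁ row
  have hC1e : ∀ (v : Fin r₁ × Fin cout → ℝ) (o : Fin cout),
      C₁.mulVec v o = v (⟨r₁ - 1, by omega⟩, o) := by
    intro v o
    simp only [Matrix.mulVec, dotProduct]
    rw [Finset.sum_eq_single ((⟨r₁ - 1, by omega⟩ : Fin r₁), o)]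
    · rw [hC₁]; simp
    · intro q _ hq
      rw [hC₁]
      have : ¬ (((q.1 : ℕ) = r₁ - 1) ∧ o = q.2) := by
        rintro ⟨h1, h2⟩
        apply hq
        obtain ⟨q1, q2⟩ := q
        simp only [Prod.mk.injEq]
        exact ⟨Fin.ext h1, h2.symm⟩
      simp [this]
    · intro h; exact absurd (Finset.mem_univ _) h
  -- evaluation of C₂ + D term
  have inj0 : ∀ i₁ i₂ (o : Fin cout),
      C₂.mulVec (x₂ i₁ i₂) o + D.mulVec (u i₁ i₂) o = F i₁ i₂ 0 o := by
    intro i₁ i₂ o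
    have e1 : C₂.mulVec (x₂ i₁ i₂) o
        = ∑ q : Fin r₂ × Fin cin, K 0 (r₂ - (q.1 : ℕ)) o q.2 * x₂ i₁ i₂ q := by
      simp only [Matrix.mulVec, dotProduct]
      exact Finset.sum_congr rfl (fun q _ => by rw [hC₂])
    have e2 : D.mulVec (u i₁ i₂) o = (K 0 0).mulVec (u i₁ i₂) o := by rw [hD]
    rw [e1, e2, main2]
  -- finish
  intro i₁ i₂
  rw [hy i₁ i₂]
  funext o
  simp only [Pi.add_apply]
  rw [add_assoc, add_assoc, inj0, hC1e, key1]
  congr 1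
  -- now scalar identity
  have htarget : ∀ t₁ : ℕ,
      (∑ t₂ ∈ Finset.range (r₂ + 1),
        if t₁ ≤ i₁ ∧ t₂ ≤ i₂ then (K t₁ t₂).mulVec (u (i₁ - t₁) (i₂ - t₂)) else 0) o
        = if t₁ ≤ i₁ then F (i₁ - t₁) i₂ t₁ o else 0 := by
    intro t₁
    rw [Finset.sum_apply]
    by_cases h : t₁ ≤ i₁
    · simp only [h, if_true, true_and, hFdef]
      unfold Fconv
      apply Finset.sum_congr rfl
      intro t₂ _
      split_ifs <;> simp
    · simp only [h, if_false]
      apply Finset.sum_eq_zero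
      intro t₂ _
      simp [h]
  rw [Finset.sum_apply]
  have hR : (∑ t₁ ∈ Finset.range (r₁ + 1),
      (∑ t₂ ∈ Finset.range (r₂ + 1),
        if t₁ ≤ i₁ ∧ t₂ ≤ i₂ then (K t₁ t₂).mulVec (u (i₁ - t₁) (i₂ - t₂)) else 0) o)
      = ∑ t₁ ∈ Finset.range (r₁ + 1), if t₁ ≤ i₁ then F (i₁ - t₁) i₂ t₁ o else 0 :=
    Finset.sum_congr rfl (fun t₁ _ => htarget t₁)
  rw [hR, Finset.sum_range_succ'
    (fun t₁ => if t₁ ≤ i₁ then F (i₁ - t₁) i₂ t₁ o else 0) r₁]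
  have h0 : (if 0 ≤ i₁ then F (i₁ - 0) i₂ 0 o else 0) = F i₁ i₂ 0 o := by simp
  rw [h0]
  congr 1
  -- key reindexing: sums over range i₁ vs range r₁
  set c : ℕ → ℝ := fun j =>
    if j + 1 ≤ r₁ ∧ j + 1 ≤ i₁ then F (i₁ - (j + 1)) i₂ (j + 1) o else 0 with hcdef
  have hL : (∑ j ∈ Finset.range i₁,
      if j ≤ ((⟨r₁ - 1, by omega⟩ : Fin r₁) : ℕ)
        then F (i₁ - 1 - j) i₂ (r₁ - ((⟨r₁ - 1, by omega⟩ : Fin r₁) : ℕ) + j) o else 0)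
      = ∑ j ∈ Finset.range i₁, c j := by
    apply Finset.sum_congr rfl
    intro j hj
    have hji := Finset.mem_range.1 hj
    simp only [hcdef]
    by_cases hc1 : j + 1 ≤ r₁
    · have : j ≤ r₁ - 1 := by omega
      have hand : j + 1 ≤ r₁ ∧ j + 1 ≤ i₁ := ⟨hc1, by omega⟩
      simp only [this, hand, if_true]
      have e1 : i₁ - 1 - j = i₁ - (j + 1) := by omega
      have e2 : r₁ - (r₁ - 1) + j = j + 1 := by omega
      rw [e1, e2]
      simp
    · have h1 : ¬ (j ≤ r₁ - 1) := by omega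
      have h2 : ¬ (j + 1 ≤ r₁ ∧ j + 1 ≤ i₁) := by omega
      simp [h1, h2]
      intro h _; exact absurd h (by omega)
  have hRR : (∑ t₁ ∈ Finset.range r₁,
      if t₁ + 1 ≤ i₁ then F (i₁ - (t₁ + 1)) i₂ (t₁ + 1) o else 0)
      = ∑ j ∈ Finset.range r₁, c j := by
    apply Finset.sum_congr rfl
    intro j hj
    have hjr := Finset.mem_range.1 hj
    simp only [hcdef]
    have h1 : j + 1 ≤ r₁ := by omega
    by_cases h2 : j + 1 ≤ i₁
    · simp [h1, h2]
    · simp [h2]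
  rw [hL, hRR]
  have hzero : ∀ N, ∀ j ∈ Finset.range N, j ∉ Finset.range (min i₁ r₁) → c j = 0 := by
    intro N j _ hj
    have := Finset.mem_range.not.1 hj
    have hjge : min i₁ r₁ ≤ j := by omega
    simp only [hcdef]
    have : ¬ (j + 1 ≤ r₁ ∧ j + 1 ≤ i₁) := by omega
    simp [this]
    intro h1 h2; exact absurd hjge (by omega)
  have e1 : ∑ j ∈ Finset.range i₁, c j = ∑ j ∈ Finset.range (min i₁ r₁), c j := by
    symm
    apply Finset.sum_subset
    · exact Finset.range_subset_range.2 (min_le_left _ _)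
    · intro j hj hj'; exact hzero i₁ j hj hj'
  have e2 : ∑ j ∈ Finset.range r₁, c j = ∑ j ∈ Finset.range (min i₁ r₁), c j := by
    symm
    apply Finset.sum_subset
    · exact Finset.range_subset_range.2 (min_le_right _ _)
    · intro j hj hj'; exact hzero r₁ j hj hj'
  rw [e1, e2]
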